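/- Let G be a one-sided POSG and Γ a set of linear functions on Δ(S) such that V(b) = sup_{α ∈ Γ} α(b) is finite for every b ∈ Δ(S), and suppose that for every α ∈ Γ there exist π1 ∈ Π1 and ᾱ ∈ Γ^{A1×O} with valcomp(π1, ᾱ)(b) ≥ α(b) for all b ∈ Δ(S). Then the same holds for Conv(Γ): V(b) = sup_{α ∈ Conv(Γ)} α(b) for every b ∈ Δ(S), and for every α ∈ Conv(Γ) there exist π1 ∈ Π1 and ᾱ ∈ Conv(Γ)^{A1×O} with valcomp(π1, ᾱ)(b) ≥ α(b) for all b ∈ Δ(S). -/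

import Mathlib

open scoped BigOperators

noncomputable section

/-- ℓ1 distance on `S → ℝ`. -/
def l1dist {S : Type*} [Fintype S] (p q : S → ℝ) : ℝ := ∑ s, |p s - q s|

/-- Evaluation at a belief `b` of the linear function on the simplex with vertex values
`α : S → ℝ`. -/
def lineval {S : Type*} [Fintype S] (α : S → ℝ) (b : S → ℝ) : ℝ := ∑ s, b s * α s

/-- `f` is `k`-Lipschitz with respect to the ℓ1 metric on the probability simplex. -/
def LipOnSimplex {S : Type*} [Fintype S] (k : ℝ) (f : (S → ℝ) → ℝ) : Prop :=
  ∀ p ∈ stdSimplex ℝ S, ∀ q ∈ stdSimplex ℝ S, |f p - f q| ≤ k * l1dist p q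

/-- A one-sided partially observable stochastic game. -/
structure OSPOSG (S A1 A2 O : Type*) [Fintype S] [Fintype A1] [Fintype A2] [Fintype O] where
  /-- transition function: `T s a1 a2 o s'` is the probability of observing `o` and moving
  to `s'` from `s` under actions `a1, a2`. -/
  T : S → A1 → A2 → O → S → ℝ
  T_nonneg : ∀ s a1 a2 o s', 0 ≤ T s a1 a2 o s'
  T_sum : ∀ s a1 a2, ∑ o, ∑ s', T s a1 a2 o s' = 1
  /-- reward function of player 1 -/
  R : S → A1 → A2 → ℝ
  /-- discount factor -/
  γ : ℝ
  γ_pos : 0 < γ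
  γ_lt_one : γ < 1

namespace OSPOSG

variable {S A1 A2 O : Type*} [Fintype S] [Fintype A1] [Fintype A2] [Fintype O]
  [Nonempty S] [Nonempty A1] [Nonempty A2] [Nonempty O]

/-- The minimum reward `r_min`. -/
def rmin (G : OSPOSG S A1 A2 O) : ℝ :=
  Finset.univ.inf' Finset.univ_nonempty fun x : S × A1 × A2 => G.R x.1 x.2.1 x.2.2

/-- The maximum reward `r_max`. -/
def rmax (G : OSPOSG S A1 A2 O) : ℝ :=
  Finset.univ.sup' Finset.univ_nonempty fun x : S × A1 × A2 => G.R x.1 x.2.1 x.2.2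

/-- `L = r_min / (1 - γ)`. -/
def Lval (G : OSPOSG S A1 A2 O) : ℝ := G.rmin / (1 - G.γ)

/-- `U = r_max / (1 - γ)`. -/
def Uval (G : OSPOSG S A1 A2 O) : ℝ := G.rmax / (1 - G.γ)

/-- `δ = (U - L) / 2`. -/
def δval (G : OSPOSG S A1 A2 O) : ℝ := (G.Uval - G.Lval) / 2

/-- The set of stage strategies of player 2. -/
def Pi2 (S A2 : Type*) [Fintype A2] : Set (S → A2 → ℝ) :=
  {π2 | ∀ s, π2 s ∈ stdSimplex ℝ A2}

/-- Vertex values of the value composition `valcomp(π1, ᾱ)`. -/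
def valcompVert (G : OSPOSG S A1 A2 O) (π1 : A1 → ℝ) (αb : A1 → O → S → ℝ) (s : S) : ℝ :=
  Finset.univ.inf' Finset.univ_nonempty fun a2 =>
    ∑ a1, π1 a1 * (G.R s a1 a2 + G.γ * ∑ o, ∑ s', G.T s a1 a2 o s' * αb a1 o s')

/-- The value composition `valcomp(π1, ᾱ)`, a linear function of the belief `b`. -/
def valcomp (G : OSPOSG S A1 A2 O) (π1 : A1 → ℝ) (αb : A1 → O → S → ℝ) (b : S → ℝ) : ℝ :=
  ∑ s, b s * G.valcompVert π1 αb s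

/-- `Pr_{b,π1,π2}[a1, o]`: the probability that player 1 plays `a1` and observes `o`. -/
def Pr (G : OSPOSG S A1 A2 O) (b : S → ℝ) (π1 : A1 → ℝ) (π2 : S → A2 → ℝ)
    (a1 : A1) (o : O) : ℝ :=
  ∑ s, ∑ a2, ∑ s', b s * π1 a1 * π2 s a2 * G.T s a1 a2 o s'

/-- The updated belief `τ(b, a1, π2, o)` of player 1 (junk value `0` if the normalizing
constant vanishes; such terms are always multiplied by a zero probability below). -/
def beliefUpd (G : OSPOSG S A1 A2 O) (b : S → ℝ) (a1 : A1) (π2 : S → A2 → ℝ) (o : O) :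
    S → ℝ := fun s' =>
  (∑ s, ∑ a2, b s * π2 s a2 * G.T s a1 a2 o s') /
    (∑ s'', ∑ s, ∑ a2, b s * π2 s a2 * G.T s a1 a2 o s'')

/-- The stage utility `u^{V,b}(π1, π2)`. -/
def stageU (G : OSPOSG S A1 A2 O) (V : (S → ℝ) → ℝ) (b : S → ℝ)
    (π1 : A1 → ℝ) (π2 : S → A2 → ℝ) : ℝ :=
  (∑ s, ∑ a1, ∑ a2, b s * π1 a1 * π2 s a2 * G.R s a1 a2) +
    G.γ * ∑ a1, ∑ o, G.Pr b π1 π2 a1 o * V (G.beliefUpd b a1 π2 o)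

/-- The minimax (Bellman) operator `[HV](b) = sup_{π1} inf_{π2} u^{V,b}(π1,π2)`. -/
def Hop (G : OSPOSG S A1 A2 O) (V : (S → ℝ) → ℝ) (b : S → ℝ) : ℝ :=
  ⨆ π1 : stdSimplex ℝ A1, ⨅ π2 : Pi2 S A2, G.stageU V b π1.1 π2.1

end OSPOSG

namespace OSPOSG

variable {S A1 A2 O : Type*} [Fintype S] [Fintype A1] [Fintype A2] [Fintype O]
  [Nonempty S] [Nonempty A1] [Nonempty A2] [Nonempty O]

/-- If `V` is represented by `Γ` and `V` is max-justified by `Γ`, then `V` is also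
represented by and max-justified by `Conv(Γ)`. -/
theorem max_justified_convexHull (G : OSPOSG S A1 A2 O) (Γ : Set (S → ℝ))
    (hne : Γ.Nonempty)
    (hbdd : ∀ b ∈ stdSimplex ℝ S, BddAbove ((fun α => lineval α b) '' Γ))
    (V : (S → ℝ) → ℝ)
    (hV : ∀ b ∈ stdSimplex ℝ S, V b = sSup ((fun α => lineval α b) '' Γ))
    (hjust : ∀ α ∈ Γ, ∃ π1 ∈ stdSimplex ℝ A1, ∃ αb : A1 → O → S → ℝ,
      (∀ a1 o, αb a1 o ∈ Γ) ∧
      ∀ b ∈ stdSimplex ℝ S, lineval α b ≤ G.valcomp π1 αb b) :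
    (∀ b ∈ stdSimplex ℝ S,
      V b = sSup ((fun α => lineval α b) '' convexHull ℝ Γ)) ∧
    (∀ α ∈ convexHull ℝ Γ, ∃ π1 ∈ stdSimplex ℝ A1, ∃ αb : A1 → O → S → ℝ,
      (∀ a1 o, αb a1 o ∈ convexHull ℝ Γ) ∧
      ∀ b ∈ stdSimplex ℝ S, lineval α b ≤ G.valcomp π1 αb b) := by
  classical
  -- vertex beliefs
  have vert_mem : ∀ s : S, (fun s' => if s' = s then (1:ℝ) else 0) ∈ stdSimplex ℝ S := by
    intro s
    constructor
    · intro x; dsimp only; split_ifs <;> norm_num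
    · simp
  have lineval_vert : ∀ (α : S → ℝ) (s : S),
      lineval α (fun s' => if s' = s then (1:ℝ) else 0) = α s := by
    intro α s; simp [lineval, ite_mul]
  have valcomp_vert : ∀ (π1 : A1 → ℝ) (αb : A1 → O → S → ℝ) (s : S),
      G.valcomp π1 αb (fun s' => if s' = s then (1:ℝ) else 0) = G.valcompVert π1 αb s := by
    intro π1 αb s; simp [valcomp, ite_mul]
  -- linearity of lineval in the α argument
  have lin_sum : ∀ {ι : Type} (t : Finset ι) (w : ι → ℝ) (z : ι → S → ℝ) (b : S → ℝ),
      lineval (∑ i ∈ t, w i • z i) b = ∑ i ∈ t, w i * lineval (z i) b := by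
    intro ι t w z b
    simp only [lineval, Finset.sum_apply, Pi.smul_apply, smul_eq_mul, Finset.mul_sum]
    rw [Finset.sum_comm]
    apply Finset.sum_congr rfl
    intro i _
    apply Finset.sum_congr rfl
    intro s _
    ring
  -- Part 1
  have key1 : ∀ b ∈ stdSimplex ℝ S,
      sSup ((fun α => lineval α b) '' convexHull ℝ Γ) = sSup ((fun α => lineval α b) '' Γ) := by
    intro b hb
    have hub : ∀ M, M ∈ upperBounds ((fun α => lineval α b) '' Γ) →
        ∀ x ∈ convexHull ℝ Γ, lineval x b ≤ M := by
      intro M hM x hx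
      rw [convexHull_eq] at hx
      obtain ⟨ι, t, w, z, hw0, hw1, hz, rfl⟩ := hx
      rw [Finset.centerMass_eq_of_sum_1 _ _ hw1, lin_sum]
      calc ∑ i ∈ t, w i * lineval (z i) b ≤ ∑ i ∈ t, w i * M := by
            apply Finset.sum_le_sum
            intro i hi
            exact mul_le_mul_of_nonneg_left (hM (Set.mem_image_of_mem _ (hz i hi))) (hw0 i hi)
        _ = M := by rw [← Finset.sum_mul, hw1, one_mul]
    obtain ⟨M, hM⟩ := hbdd b hb
    have hbddconv : BddAbove ((fun α => lineval α b) '' convexHull ℝ Γ) := by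
      refine ⟨M, ?_⟩
      rintro x ⟨α, hα, rfl⟩
      exact hub M hM α hα
    apply le_antisymm
    · apply csSup_le ((hne.mono (subset_convexHull ℝ Γ)).image _)
      rintro x ⟨α, hα, rfl⟩
      exact hub _ (fun y hy => le_csSup (hbdd b hb) hy) α hα
    · exact csSup_le_csSup hbddconv (hne.image _)
        (Set.image_mono (subset_convexHull ℝ Γ))
  refine ⟨fun b hb => (hV b hb).trans (key1 b hb).symm, ?_⟩
  -- Part 2
  intro α hα
  rw [convexHull_eq] at hα
  obtain ⟨ι, t, w, z, hw0, hw1, hz, rfl⟩ := hα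
  choose! π1i hπ1i αbi hαbi hcomp using fun i (hi : i ∈ t) => hjust (z i) (hz i hi)
  set π1 : A1 → ℝ := fun a1 => ∑ i ∈ t, w i * π1i i a1 with hπ1def
  have hπ1nn : ∀ a1 i, i ∈ t → 0 ≤ w i * π1i i a1 := by
    intro a1 i hi
    exact mul_nonneg (hw0 i hi) ((hπ1i i hi).1 a1)
  have hπ1mem : π1 ∈ stdSimplex ℝ A1 := by
    constructor
    · intro a1
      exact Finset.sum_nonneg (hπ1nn a1)
    · rw [hπ1def]
      dsimp only
      rw [Finset.sum_comm]
      rw [show (1:ℝ) = ∑ i ∈ t, w i from hw1.symm]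
      apply Finset.sum_congr rfl
      intro i hi
      rw [← Finset.mul_sum, (hπ1i i hi).2, mul_one]
  set αb : A1 → O → S → ℝ := fun a1 o =>
    if h : π1 a1 = 0 then hne.choose
    else t.centerMass (fun i => w i * π1i i a1) (fun i => αbi i a1 o) with hαbdef
  have hαbmem : ∀ a1 o, αb a1 o ∈ convexHull ℝ Γ := by
    intro a1 o
    rw [hαbdef]
    dsimp only
    split_ifs with h
    · exact subset_convexHull ℝ Γ hne.choose_spec
    · apply Finset.centerMass_mem_convexHull
      · exact hπ1nn a1
      · exact lt_of_le_of_ne (Finset.sum_nonneg (hπ1nn a1)) (Ne.symm h)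
      · intro i hi
        exact hαbi i hi a1 o
  have hαbval : ∀ a1, π1 a1 ≠ 0 → ∀ o s',
      π1 a1 * αb a1 o s' = ∑ i ∈ t, w i * π1i i a1 * αbi i a1 o s' := by
    intro a1 h o s'
    rw [hαbdef]
    dsimp only
    rw [dif_neg h]
    rw [Finset.centerMass]
    simp only [Pi.smul_apply, Finset.sum_apply, smul_eq_mul]
    rw [← mul_assoc, mul_inv_cancel₀ h, one_mul]
  -- the key decomposition of the stage payoff
  have hF : ∀ (s : S) (a2 : A2),
      (∑ a1, π1 a1 * (G.R s a1 a2 + G.γ * ∑ o, ∑ s', G.T s a1 a2 o s' * αb a1 o s'))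
        = ∑ i ∈ t, w i * (∑ a1, π1i i a1 *
            (G.R s a1 a2 + G.γ * ∑ o, ∑ s', G.T s a1 a2 o s' * αbi i a1 o s')) := by
    intro s a2
    have swapA : ∀ f : ι → A1 → ℝ,
        ∑ i ∈ t, w i * ∑ a1, f i a1 = ∑ a1, ∑ i ∈ t, w i * f i a1 := by
      intro f
      simp only [Finset.mul_sum]
      exact Finset.sum_comm
    rw [swapA]
    apply Finset.sum_congr rfl
    intro a1 _
    by_cases h : π1 a1 = 0
    · rw [h, zero_mul]
      symm
      apply Finset.sum_eq_zero
      intro i hi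
      have hz0 : w i * π1i i a1 = 0 :=
        (Finset.sum_eq_zero_iff_of_nonneg (hπ1nn a1)).mp h i hi
      calc w i * (π1i i a1 * (G.R s a1 a2 +
              G.γ * ∑ o, ∑ s', G.T s a1 a2 o s' * αbi i a1 o s'))
          = (w i * π1i i a1) * (G.R s a1 a2 +
              G.γ * ∑ o, ∑ s', G.T s a1 a2 o s' * αbi i a1 o s') := by ring
        _ = 0 := by rw [hz0, zero_mul]
    · have hD : π1 a1 * (∑ o, ∑ s', G.T s a1 a2 o s' * αb a1 o s')
          = ∑ i ∈ t, (w i * π1i i a1) *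
              (∑ o, ∑ s', G.T s a1 a2 o s' * αbi i a1 o s') := by
        rw [Finset.mul_sum]
        have swapO : ∀ g : ι → O → ℝ, ∑ i ∈ t, (w i * π1i i a1) * ∑ o, g i o
            = ∑ o, ∑ i ∈ t, (w i * π1i i a1) * g i o := by
          intro g; simp only [Finset.mul_sum]; exact Finset.sum_comm
        rw [swapO]
        apply Finset.sum_congr rfl
        intro o _
        rw [Finset.mul_sum]
        have swapS : ∀ g : ι → S → ℝ, ∑ i ∈ t, (w i * π1i i a1) * ∑ s', g i s'
            = ∑ s', ∑ i ∈ t, (w i * π1i i a1) * g i s' := by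
          intro g; simp only [Finset.mul_sum]; exact Finset.sum_comm
        rw [swapS]
        apply Finset.sum_congr rfl
        intro s' _
        rw [show π1 a1 * (G.T s a1 a2 o s' * αb a1 o s')
              = G.T s a1 a2 o s' * (π1 a1 * αb a1 o s') by ring,
            hαbval a1 h o s', Finset.mul_sum]
        exact Finset.sum_congr rfl fun i _ => by ring
      have hπ : π1 a1 = ∑ i ∈ t, w i * π1i i a1 := rfl
      calc π1 a1 * (G.R s a1 a2 + G.γ * ∑ o, ∑ s', G.T s a1 a2 o s' * αb a1 o s')
          = π1 a1 * G.R s a1 a2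
            + G.γ * (π1 a1 * ∑ o, ∑ s', G.T s a1 a2 o s' * αb a1 o s') := by ring
        _ = (∑ i ∈ t, w i * π1i i a1) * G.R s a1 a2
            + G.γ * ∑ i ∈ t, (w i * π1i i a1) *
                (∑ o, ∑ s', G.T s a1 a2 o s' * αbi i a1 o s') := by rw [← hπ, hD]
        _ = ∑ i ∈ t, w i * (π1i i a1 * (G.R s a1 a2 +
              G.γ * ∑ o, ∑ s', G.T s a1 a2 o s' * αbi i a1 o s')) := by
            rw [Finset.sum_mul, Finset.mul_sum, ← Finset.sum_add_distrib]
            exact Finset.sum_congr rfl fun i _ => by ring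
  -- vertexwise inequality
  have hvert : ∀ s : S, (∑ i ∈ t, w i • z i) s ≤ G.valcompVert π1 αb s := by
    intro s
    have step1 : (∑ i ∈ t, w i • z i) s
        ≤ ∑ i ∈ t, w i * G.valcompVert (π1i i) (αbi i) s := by
      rw [Finset.sum_apply]
      apply Finset.sum_le_sum
      intro i hi
      have h1 := hcomp i hi _ (vert_mem s)
      rw [lineval_vert, valcomp_vert] at h1
      simpa using mul_le_mul_of_nonneg_left h1 (hw0 i hi)
    refine step1.trans ?_
    apply Finset.le_inf'
    intro a2 _
    rw [hF s a2]
    apply Finset.sum_le_sum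
    intro i hi
    exact mul_le_mul_of_nonneg_left
      (Finset.inf'_le _ (Finset.mem_univ a2)) (hw0 i hi)
  refine ⟨π1, hπ1mem, αb, hαbmem, ?_⟩
  intro b hb
  rw [Finset.centerMass_eq_of_sum_1 _ _ hw1, lineval, valcomp]
  apply Finset.sum_le_sum
  intro s _
  exact mul_le_mul_of_nonneg_left (hvert s) (hb.1 s)


end OSPOSG
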